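/- arXiv:1611.00682 — 3 statements merged into one kernel-verified Lean document; each statement's English description precedes it below -/
import Mathlib

section
/- Suppose f belongs to the closed convex hull of the starlike functions; equivalently, f(z) = (z/2)·(1 + g(z) + z·g'(z)) on 𝔻 for some g ∈ P, so that its Taylor coefficients satisfy a_n = n·p_{n−1}/2 for n ≥ 2. Then for all m, n ≥ 2 and every λ ∈ ℂ: |λ·a_m·a_n − a_{m+n−1}| ≤ (m+n−1)·max{ 1 , |1 − (mn/(m+n−1))·λ| }. -/
open Metric Complex intervalIntegral Real

lemma aux_exp_integral (c : ℤ) :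
    (∫ θ in (0:ℝ)..(2*π), Complex.exp (c * θ * I)) = if c = 0 then (2*π : ℂ) else 0 := by
  rcases eq_or_ne c 0 with hc | hc
  · subst hc
    simp
  · rw [if_neg hc]
    have hc' : (c : ℂ) * I ≠ 0 := by
      simp [Complex.ext_iff, hc]
    have : ∀ θ : ℝ, Complex.exp ((c:ℂ) * θ * I) = Complex.exp (((c:ℂ) * I) * θ) := by
      intro θ; ring_nf
    simp_rw [this]
    rw [integral_exp_mul_complex hc']
    have h1 : (c:ℂ) * I * ((2*π : ℝ) : ℂ) = c * (2 * π * I) := by push_cast; ring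
    rw [h1, Complex.exp_int_mul_two_pi_mul_I]
    simp

lemma aux_summable (g : ℂ → ℂ) (p : ℕ → ℂ)
    (hsum : ∀ z ∈ ball (0 : ℂ) 1, HasSum (fun n : ℕ => p n * z ^ n) (g z))
    {r : ℝ} (hr0 : 0 ≤ r) (hr1 : r < 1) :
    Summable (fun k : ℕ => ‖p k‖ * r ^ k) := by
  set r' : ℝ := (r + 1) / 2 with hr'
  have hrr' : r < r' := by rw [hr']; linarith
  have hr'0 : 0 < r' := by rw [hr']; linarith
  have hr'1 : r' < 1 := by rw [hr']; linarith
  have hz : ((r' : ℂ)) ∈ ball (0 : ℂ) 1 := by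
    simp [abs_of_pos hr'0, hr'1]
  have hS := (hsum _ hz).summable
  have htend : Filter.Tendsto (fun k : ℕ => p k * (r' : ℂ) ^ k) Filter.atTop (nhds 0) :=
    hS.tendsto_atTop_zero
  have hbdd : ∃ M : ℝ, 0 ≤ M ∧ ∀ k : ℕ, ‖p k‖ * r' ^ k ≤ M := by
    obtain ⟨M, hM⟩ := htend.norm.bddAbove_range
    refine ⟨max M 0, le_max_right _ _, fun k => ?_⟩
    have : ‖p k * (r' : ℂ) ^ k‖ ≤ M := hM ⟨k, rfl⟩
    calc ‖p k‖ * r' ^ k = ‖p k * (r' : ℂ) ^ k‖ := by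
          simp [norm_mul, abs_of_pos hr'0, abs_pow]
      _ ≤ M := this
      _ ≤ max M 0 := le_max_left _ _
  obtain ⟨M, hM0, hM⟩ := hbdd
  have hgeom : Summable (fun k : ℕ => M * (r / r') ^ k) := by
    apply Summable.mul_left
    apply summable_geometric_of_lt_one (by positivity)
    rw [div_lt_one hr'0]; exact hrr'
  refine Summable.of_nonneg_of_le (fun k => by positivity) (fun k => ?_) hgeom
  have h1 : ‖p k‖ * r ^ k = (‖p k‖ * r' ^ k) * (r / r') ^ k := by
    have hr'ne : r' ≠ 0 := ne_of_gt hr'0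
    rw [mul_assoc, ← mul_pow, mul_div_cancel₀ _ hr'ne]
  rw [h1]
  apply mul_le_mul_of_nonneg_right (hM k) (by positivity)

lemma aux_norm_exp (c : ℤ) (θ : ℝ) : ‖Complex.exp ((c:ℂ) * θ * I)‖ = 1 := by
  have : ((c:ℂ) * θ) = ((c * θ : ℝ) : ℂ) := by push_cast; ring
  rw [this, Complex.norm_exp_ofReal_mul_I]

lemma aux_norm_circle {r : ℝ} (hr0 : 0 ≤ r) (θ : ℝ) : ‖(r:ℂ) * Complex.exp (θ * I)‖ = r := by
  rw [norm_mul, Complex.norm_real, Real.norm_of_nonneg hr0]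
  have : ((θ:ℂ) * I) = ((1:ℤ):ℂ) * θ * I := by push_cast; ring
  rw [this, aux_norm_exp 1 θ, mul_one]

lemma aux_fourier (g : ℂ → ℂ) (p : ℕ → ℂ)
    (hsum : ∀ z ∈ ball (0 : ℂ) 1, HasSum (fun n : ℕ => p n * z ^ n) (g z))
    {r : ℝ} (hr0 : 0 < r) (hr1 : r < 1) (c : ℤ) :
    (∫ θ in (0:ℝ)..(2*π), g ((r:ℂ) * Complex.exp (θ * I)) * Complex.exp ((c:ℂ) * θ * I)) =
      if 0 ≤ -c then (2*π : ℂ) * (p (-c).toNat * ((r:ℝ):ℂ) ^ ((-c).toNat)) else 0 := by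
  have hπ : (0:ℝ) ≤ 2*π := by positivity
  set μ := MeasureTheory.volume.restrict (Set.Ioc (0:ℝ) (2*π)) with hμ
  set F : ℕ → ℝ → ℂ := fun k θ => p k * ((r:ℂ) * Complex.exp (θ * I)) ^ k *
    Complex.exp ((c:ℂ) * θ * I) with hF
  have hz : ∀ θ : ℝ, (r:ℂ) * Complex.exp (θ * I) ∈ ball (0:ℂ) 1 := by
    intro θ
    rw [mem_ball_zero_iff, aux_norm_circle hr0.le]
    exact hr1
  have htsum : ∀ θ : ℝ, (∑' k, F k θ) =
      g ((r:ℂ) * Complex.exp (θ * I)) * Complex.exp ((c:ℂ) * θ * I) := fun θ =>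
    ((hsum _ (hz θ)).mul_right _).tsum_eq
  have hcont : ∀ k, Continuous (F k) := by
    intro k
    apply Continuous.mul
    · apply Continuous.mul continuous_const
      apply Continuous.pow
      exact continuous_const.mul (Complex.continuous_exp.comp (Complex.continuous_ofReal.mul continuous_const))
    · exact Complex.continuous_exp.comp ((continuous_const.mul Complex.continuous_ofReal).mul continuous_const)
  have hFint : ∀ k, MeasureTheory.Integrable (F k) μ :=
    fun k => (hcont k).integrableOn_Ioc
  have hnorm : ∀ k θ, ‖F k θ‖ = ‖p k‖ * r ^ k := by
    intro k θ
    rw [hF]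
    simp only [norm_mul, norm_pow, aux_norm_circle hr0.le, aux_norm_exp c θ, mul_one]
  have hsumint : Summable fun k => ∫ θ, ‖F k θ‖ ∂μ := by
    have : ∀ k, (∫ θ, ‖F k θ‖ ∂μ) = (2*π) * (‖p k‖ * r ^ k) := by
      intro k
      simp_rw [hnorm k]
      rw [hμ, MeasureTheory.setIntegral_const, Real.volume_real_Ioc_of_le hπ, smul_eq_mul]
      rw [sub_zero]
    simp_rw [this]
    exact (aux_summable g p hsum hr0.le hr1).mul_left _
  have key := MeasureTheory.hasSum_integral_of_summable_integral_norm hFint hsumint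
  have heval : ∀ k : ℕ, (∫ θ, F k θ ∂μ) =
      if (k:ℤ) = -c then (2*π : ℂ) * (p k * ((r:ℝ):ℂ) ^ k) else 0 := by
    intro k
    have hFeq : ∀ θ : ℝ, F k θ = (p k * ((r:ℝ):ℂ) ^ k) *
        Complex.exp ((((k:ℤ) + c : ℤ):ℂ) * θ * I) := by
      intro θ
      have h2 : ((((k:ℤ) + c : ℤ)):ℂ) * θ * I = (k:ℂ) * (θ * I) + (c:ℂ) * θ * I := by
        push_cast; ring
      rw [hF]
      simp only
      rw [mul_pow, ← Complex.exp_nat_mul, h2, Complex.exp_add]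
      ring
    simp_rw [hFeq]
    rw [MeasureTheory.integral_const_mul]
    have : (∫ θ, Complex.exp ((((k:ℤ) + c : ℤ):ℂ) * θ * I) ∂μ)
        = ∫ θ in (0:ℝ)..(2*π), Complex.exp ((((k:ℤ) + c : ℤ):ℂ) * θ * I) := by
      rw [intervalIntegral.integral_of_le hπ]
    rw [this, aux_exp_integral]
    by_cases hk : (k:ℤ) = -c
    · rw [if_pos hk, if_pos (by omega)]
      ring
    · rw [if_neg (by omega), if_neg hk]
      ring
  rw [intervalIntegral.integral_of_le hπ]
  have hLHS : (∫ θ in Set.Ioc (0:ℝ) (2*π),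
      g ((r:ℂ) * Complex.exp (θ * I)) * Complex.exp ((c:ℂ) * θ * I)) = ∫ θ, (∑' k, F k θ) ∂μ := by
    rw [hμ]
    exact MeasureTheory.integral_congr_ae (Filter.Eventually.of_forall fun θ => (htsum θ).symm)
  rw [hLHS]
  by_cases hc : 0 ≤ -c
  · rw [if_pos hc]
    have hk0 : ((((-c).toNat : ℕ)):ℤ) = -c := Int.toNat_of_nonneg hc
    have h0 : ∀ (b : ℕ), b ≠ (-c).toNat → (∫ θ, F b θ ∂μ) = 0 := by
      intro b hb
      rw [heval b, if_neg (by omega)]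
    have hsingle : HasSum (fun k => ∫ θ, F k θ ∂μ)
        ((2*π : ℂ) * (p (-c).toNat * ((r:ℝ):ℂ) ^ ((-c).toNat))) := by
      have hv : (∫ θ, F ((-c).toNat) θ ∂μ)
          = (2*π : ℂ) * (p (-c).toNat * ((r:ℝ):ℂ) ^ ((-c).toNat)) := by
        rw [heval, if_pos hk0]
      rw [← hv]
      exact hasSum_single (f := fun k => ∫ θ, F k θ ∂μ) ((-c).toNat) h0
    exact key.unique hsingle
  · rw [if_neg hc]
    have hzero : HasSum (fun k => ∫ θ, F k θ ∂μ) 0 := by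
      have : (fun k => ∫ θ, F k θ ∂μ) = fun _ => (0:ℂ) := by
        funext k
        rw [heval k, if_neg (by omega)]
      rw [this]
      exact hasSum_zero
    exact key.unique hzero

lemma aux_gcont (g : ℂ → ℂ) (p : ℕ → ℂ)
    (hsum : ∀ z ∈ ball (0 : ℂ) 1, HasSum (fun n : ℕ => p n * z ^ n) (g z))
    {r : ℝ} (hr0 : 0 < r) (hr1 : r < 1) :
    Continuous fun θ : ℝ => g ((r:ℂ) * Complex.exp (θ * I)) := by
  have hz : ∀ θ : ℝ, (r:ℂ) * Complex.exp (θ * I) ∈ ball (0:ℂ) 1 := by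
    intro θ
    rw [mem_ball_zero_iff, aux_norm_circle hr0.le]
    exact hr1
  have hcont : Continuous fun θ : ℝ => ∑' k : ℕ, p k * ((r:ℂ) * Complex.exp (θ * I)) ^ k := by
    apply continuous_tsum (u := fun k => ‖p k‖ * r ^ k)
    · intro k
      apply Continuous.mul continuous_const
      apply Continuous.pow
      exact continuous_const.mul (Complex.continuous_exp.comp
        (Complex.continuous_ofReal.mul continuous_const))
    · exact aux_summable g p hsum hr0.le hr1
    · intro k θ
      rw [norm_mul, norm_pow, aux_norm_circle hr0.le]
  exact hcont.congr fun θ => (hsum _ (hz θ)).tsum_eq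

lemma aux_expand_alg (G t₀ t₁ t₂ x y : ℂ) (hx : x ≠ 0) (hy : y ≠ 0) :
    G * ((t₀ + t₁ * x + t₂ * (x * y)) *
        ((starRingEnd ℂ) t₀ + (starRingEnd ℂ) t₁ * x⁻¹ + (starRingEnd ℂ) t₂ * (x * y)⁻¹)) =
      (t₀ * (starRingEnd ℂ) t₀ + t₁ * (starRingEnd ℂ) t₁ + t₂ * (starRingEnd ℂ) t₂) * G
      + (t₀ * (starRingEnd ℂ) t₁) * (G * x⁻¹)
      + (t₀ * (starRingEnd ℂ) t₂) * (G * (x * y)⁻¹)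
      + (t₁ * (starRingEnd ℂ) t₂) * (G * y⁻¹)
      + (t₁ * (starRingEnd ℂ) t₀) * (G * x)
      + (t₂ * (starRingEnd ℂ) t₀) * (G * (x * y))
      + (t₂ * (starRingEnd ℂ) t₁) * (G * y) := by
  field_simp
  ring

lemma aux_wpow (k : ℕ) (θ : ℝ) :
    Complex.exp ((((k:ℕ):ℤ):ℂ) * θ * I) = Complex.exp (θ * I) ^ k := by
  rw [← Complex.exp_nat_mul]
  congr 1
  push_cast
  ring

lemma aux_wpow_neg (k : ℕ) (θ : ℝ) :
    Complex.exp (((-((k:ℕ):ℤ)):ℂ) * θ * I) = (Complex.exp (θ * I) ^ k)⁻¹ := by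
  rw [← aux_wpow k θ, ← Complex.exp_neg]
  congr 1
  push_cast
  ring

lemma aux_conj_w (θ : ℝ) :
    (starRingEnd ℂ) (Complex.exp (θ * I)) = (Complex.exp (θ * I))⁻¹ := by
  rw [← Complex.exp_conj, ← Complex.exp_neg]
  congr 1
  simp

lemma aux_re_mul_ofReal (Z : ℂ) (x : ℝ) : (Z * (x:ℂ)).re = Z.re * x := by
  rw [mul_comm, Complex.re_ofReal_mul, mul_comm]

lemma aux_pos_r (g : ℂ → ℂ) (p : ℕ → ℂ) (hp0 : p 0 = 1)
    (hsum : ∀ z ∈ ball (0 : ℂ) 1, HasSum (fun n : ℕ => p n * z ^ n) (g z))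
    (hre : ∀ z ∈ ball (0 : ℂ) 1, 0 < (g z).re)
    (i j : ℕ) (hi : 1 ≤ i) (hj : 1 ≤ j)
    {r : ℝ} (hr0 : 0 < r) (hr1 : r < 1) (t₀ t₁ t₂ : ℂ) :
    0 ≤ (t₀ * (starRingEnd ℂ) t₀ + t₁ * (starRingEnd ℂ) t₁ + t₂ * (starRingEnd ℂ) t₂).re
      + (t₀ * (starRingEnd ℂ) t₁ * p i).re * r ^ i
      + (t₀ * (starRingEnd ℂ) t₂ * p (i + j)).re * r ^ (i + j)
      + (t₁ * (starRingEnd ℂ) t₂ * p j).re * r ^ j := by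
  have hπ : (0:ℝ) ≤ 2*π := by positivity
  have hz : ∀ θ : ℝ, (r:ℂ) * Complex.exp (θ * I) ∈ ball (0:ℂ) 1 := by
    intro θ
    rw [mem_ball_zero_iff, aux_norm_circle hr0.le]
    exact hr1
  set w : ℝ → ℂ := fun θ => Complex.exp (θ * I) with hw
  set gz : ℝ → ℂ := fun θ => g ((r:ℂ) * Complex.exp (θ * I)) with hgz
  set u : ℝ → ℂ := fun θ => t₀ + t₁ * w θ ^ i + t₂ * (w θ ^ i * w θ ^ j) with hu
  set φ : ℝ → ℂ := fun θ => gz θ * (u θ * (starRingEnd ℂ) (u θ)) with hφ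
  set Gc : ℤ → ℝ → ℂ := fun c θ => gz θ * Complex.exp ((c:ℂ) * θ * I) with hGc
  have hwcont : Continuous w := Complex.continuous_exp.comp
    (Complex.continuous_ofReal.mul continuous_const)
  have hgzcont : Continuous gz := aux_gcont g p hsum hr0 hr1
  have hucont : Continuous u := by
    apply Continuous.add
    apply Continuous.add continuous_const
    · exact continuous_const.mul (hwcont.pow i)
    · exact continuous_const.mul ((hwcont.pow i).mul (hwcont.pow j))
  have hφcont : Continuous φ := hgzcont.mul (hucont.mul (continuous_star.comp hucont))
  have hGccont : ∀ c : ℤ, Continuous (Gc c) := by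
    intro c
    exact hgzcont.mul (Complex.continuous_exp.comp
      ((continuous_const.mul Complex.continuous_ofReal).mul continuous_const))
  have hGcint : ∀ c : ℤ, IntervalIntegrable (Gc c) MeasureTheory.volume 0 (2*π) :=
    fun c => (hGccont c).intervalIntegrable _ _
  -- Step A : nonnegativity of the real part integral
  have hA : 0 ≤ ∫ θ in (0:ℝ)..(2*π), (φ θ).re := by
    apply intervalIntegral.integral_nonneg hπ
    intro θ _
    have h1 : u θ * (starRingEnd ℂ) (u θ) = ((Complex.normSq (u θ) : ℝ) : ℂ) :=
      Complex.mul_conj _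
    rw [hφ]
    simp only
    rw [h1, mul_comm, Complex.re_ofReal_mul]
    exact mul_nonneg (Complex.normSq_nonneg _) (hre _ (hz θ)).le
  -- Step B : relate to the real part of the complex integral
  have hB : (∫ θ in (0:ℝ)..(2*π), (φ θ).re) = (∫ θ in (0:ℝ)..(2*π), φ θ).re := by
    rw [intervalIntegral.integral_of_le hπ, intervalIntegral.integral_of_le hπ]
    exact integral_re (hφcont.integrableOn_Ioc)
  -- Step C : pointwise expansion
  have hexp2 : ∀ θ : ℝ, φ θ =
      (t₀ * (starRingEnd ℂ) t₀ + t₁ * (starRingEnd ℂ) t₁ + t₂ * (starRingEnd ℂ) t₂) * Gc 0 θ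
      + (t₀ * (starRingEnd ℂ) t₁) * Gc (-(i:ℤ)) θ
      + (t₀ * (starRingEnd ℂ) t₂) * Gc (-((i+j : ℕ):ℤ)) θ
      + (t₁ * (starRingEnd ℂ) t₂) * Gc (-(j:ℤ)) θ
      + (t₁ * (starRingEnd ℂ) t₀) * Gc ((i:ℕ):ℤ) θ
      + (t₂ * (starRingEnd ℂ) t₀) * Gc ((i+j : ℕ):ℤ) θ
      + (t₂ * (starRingEnd ℂ) t₁) * Gc ((j:ℕ):ℤ) θ := by
    intro θ
    have hGc0 : Gc 0 θ = gz θ := by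
      rw [hGc]; simp
    have hGcp : ∀ k : ℕ, Gc ((k:ℕ):ℤ) θ = gz θ * w θ ^ k := by
      intro k
      simp only [hGc, hw]
      congr 1
      rw [← Complex.exp_nat_mul]
      congr 1
      push_cast
      ring
    have hGcn : ∀ k : ℕ, Gc (-((k:ℕ):ℤ)) θ = gz θ * (w θ ^ k)⁻¹ := by
      intro k
      simp only [hGc, hw]
      congr 1
      rw [← Complex.exp_nat_mul, ← Complex.exp_neg]
      congr 1
      push_cast
      ring
    have hwne : w θ ≠ 0 := Complex.exp_ne_zero _
    have hconju : (starRingEnd ℂ) (u θ) =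
        (starRingEnd ℂ) t₀ + (starRingEnd ℂ) t₁ * (w θ ^ i)⁻¹
          + (starRingEnd ℂ) t₂ * (w θ ^ i * w θ ^ j)⁻¹ := by
      simp only [hu, hw, map_add, map_mul, map_pow, aux_conj_w, inv_pow, mul_inv]
    rw [hφ]
    simp only
    rw [hconju, hGc0, hGcp i, hGcp j, hGcn i, hGcn j]
    have hij : Gc ((i+j : ℕ):ℤ) θ = gz θ * (w θ ^ i * w θ ^ j) := by
      rw [hGcp (i+j), pow_add]
    have hijn : Gc (-((i+j : ℕ):ℤ)) θ = gz θ * (w θ ^ i * w θ ^ j)⁻¹ := by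
      rw [hGcn (i+j), pow_add]
    rw [hij, hijn]
    exact aux_expand_alg (gz θ) t₀ t₁ t₂ (w θ ^ i) (w θ ^ j)
      (pow_ne_zero _ hwne) (pow_ne_zero _ hwne)
  -- Step D : compute the complex integral
  have hval : ∀ c : ℤ, (∫ θ in (0:ℝ)..(2*π), Gc c θ) =
      if 0 ≤ -c then (2*π : ℂ) * (p (-c).toNat * ((r:ℝ):ℂ) ^ ((-c).toNat)) else 0 :=
    fun c => aux_fourier g p hsum hr0 hr1 c
  have hv0 : (∫ θ in (0:ℝ)..(2*π), Gc 0 θ) = ((2*π:ℝ):ℂ) := by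
    rw [hval 0]
    simp [hp0]
  have hvn : ∀ k : ℕ, (∫ θ in (0:ℝ)..(2*π), Gc (-((k:ℕ):ℤ)) θ)
      = ((2*π:ℝ):ℂ) * (p k * ((r:ℝ):ℂ) ^ k) := by
    intro k
    rw [hval]
    rw [if_pos (by omega)]
    simp
  have hvp : ∀ k : ℕ, 1 ≤ k → (∫ θ in (0:ℝ)..(2*π), Gc ((k:ℕ):ℤ) θ) = 0 := by
    intro k hk
    rw [hval]
    rw [if_neg (by omega)]
  have h1 := (hGcint 0).const_mul
    (t₀ * (starRingEnd ℂ) t₀ + t₁ * (starRingEnd ℂ) t₁ + t₂ * (starRingEnd ℂ) t₂)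
  have h2 := (hGcint (-(i:ℤ))).const_mul (t₀ * (starRingEnd ℂ) t₁)
  have h3 := (hGcint (-((i+j:ℕ):ℤ))).const_mul (t₀ * (starRingEnd ℂ) t₂)
  have h4 := (hGcint (-(j:ℤ))).const_mul (t₁ * (starRingEnd ℂ) t₂)
  have h5 := (hGcint ((i:ℕ):ℤ)).const_mul (t₁ * (starRingEnd ℂ) t₀)
  have h6 := (hGcint ((i+j:ℕ):ℤ)).const_mul (t₂ * (starRingEnd ℂ) t₀)
  have h7 := (hGcint ((j:ℕ):ℤ)).const_mul (t₂ * (starRingEnd ℂ) t₁)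
  have hφval : (∫ θ in (0:ℝ)..(2*π), φ θ) = ((2*π:ℝ):ℂ) *
      ((t₀ * (starRingEnd ℂ) t₀ + t₁ * (starRingEnd ℂ) t₁ + t₂ * (starRingEnd ℂ) t₂)
        + t₀ * (starRingEnd ℂ) t₁ * p i * ((r:ℝ):ℂ) ^ i
        + t₀ * (starRingEnd ℂ) t₂ * p (i+j) * ((r:ℝ):ℂ) ^ (i+j)
        + t₁ * (starRingEnd ℂ) t₂ * p j * ((r:ℝ):ℂ) ^ j) := by
    rw [intervalIntegral.integral_congr (g := fun θ =>
      (t₀ * (starRingEnd ℂ) t₀ + t₁ * (starRingEnd ℂ) t₁ + t₂ * (starRingEnd ℂ) t₂) * Gc 0 θ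
      + (t₀ * (starRingEnd ℂ) t₁) * Gc (-(i:ℤ)) θ
      + (t₀ * (starRingEnd ℂ) t₂) * Gc (-((i+j : ℕ):ℤ)) θ
      + (t₁ * (starRingEnd ℂ) t₂) * Gc (-(j:ℤ)) θ
      + (t₁ * (starRingEnd ℂ) t₀) * Gc ((i:ℕ):ℤ) θ
      + (t₂ * (starRingEnd ℂ) t₀) * Gc ((i+j : ℕ):ℤ) θ
      + (t₂ * (starRingEnd ℂ) t₁) * Gc ((j:ℕ):ℤ) θ) (fun θ _ => hexp2 θ)]
    rw [intervalIntegral.integral_add (((((h1.add h2).add h3).add h4).add h5).add h6) h7,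
        intervalIntegral.integral_add ((((h1.add h2).add h3).add h4).add h5) h6,
        intervalIntegral.integral_add (((h1.add h2).add h3).add h4) h5,
        intervalIntegral.integral_add ((h1.add h2).add h3) h4,
        intervalIntegral.integral_add (h1.add h2) h3,
        intervalIntegral.integral_add h1 h2]
    simp only [intervalIntegral.integral_const_mul]
    rw [hv0, hvn i, hvn j, hvn (i+j), hvp i hi, hvp j hj, hvp (i+j) (by omega)]
    ring
  -- Step E : conclude
  have hA' : (0:ℝ) ≤ (2*π) *
      ((t₀ * (starRingEnd ℂ) t₀ + t₁ * (starRingEnd ℂ) t₁ + t₂ * (starRingEnd ℂ) t₂).re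
        + (t₀ * (starRingEnd ℂ) t₁ * p i).re * r ^ i
        + (t₀ * (starRingEnd ℂ) t₂ * p (i+j)).re * r ^ (i+j)
        + (t₁ * (starRingEnd ℂ) t₂ * p j).re * r ^ j) := by
    have h0 := hA
    rw [hB, hφval, Complex.re_ofReal_mul] at h0
    convert h0 using 2
    simp only [Complex.add_re, ← Complex.ofReal_pow, aux_re_mul_ofReal]
  have h2π : (0:ℝ) < 2*π := by positivity
  have := div_nonneg hA' h2π.le
  rwa [mul_div_cancel_left₀ _ (ne_of_gt h2π)] at this

lemma aux_pos (g : ℂ → ℂ) (p : ℕ → ℂ) (hp0 : p 0 = 1)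
    (hsum : ∀ z ∈ ball (0 : ℂ) 1, HasSum (fun n : ℕ => p n * z ^ n) (g z))
    (hre : ∀ z ∈ ball (0 : ℂ) 1, 0 < (g z).re)
    (i j : ℕ) (hi : 1 ≤ i) (hj : 1 ≤ j) (t₀ t₁ t₂ : ℂ) :
    0 ≤ (t₀ * (starRingEnd ℂ) t₀ + t₁ * (starRingEnd ℂ) t₁ + t₂ * (starRingEnd ℂ) t₂).re
      + (t₀ * (starRingEnd ℂ) t₁ * p i).re
      + (t₀ * (starRingEnd ℂ) t₂ * p (i + j)).re
      + (t₁ * (starRingEnd ℂ) t₂ * p j).re := by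
  set S0 : ℝ := (t₀ * (starRingEnd ℂ) t₀ + t₁ * (starRingEnd ℂ) t₁ + t₂ * (starRingEnd ℂ) t₂).re
  set c1 : ℝ := (t₀ * (starRingEnd ℂ) t₁ * p i).re
  set c2 : ℝ := (t₀ * (starRingEnd ℂ) t₂ * p (i + j)).re
  set c3 : ℝ := (t₁ * (starRingEnd ℂ) t₂ * p j).re
  set Φ : ℝ → ℝ := fun r => S0 + c1 * r ^ i + c2 * r ^ (i + j) + c3 * r ^ j with hΦ
  have hcont : Continuous Φ := by
    apply Continuous.add
    apply Continuous.add
    apply Continuous.add continuous_const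
    · exact continuous_const.mul (continuous_pow i)
    · exact continuous_const.mul (continuous_pow (i + j))
    · exact continuous_const.mul (continuous_pow j)
  haveI : Filter.NeBot (nhdsWithin (1:ℝ) (Set.Ioo 0 1)) :=
    right_nhdsWithin_Ioo_neBot (by norm_num)
  have htend : Filter.Tendsto Φ (nhdsWithin (1:ℝ) (Set.Ioo 0 1)) (nhds (Φ 1)) :=
    (hcont.tendsto 1).mono_left nhdsWithin_le_nhds
  have hev : ∀ᶠ r in nhdsWithin (1:ℝ) (Set.Ioo 0 1), 0 ≤ Φ r := by
    filter_upwards [eventually_mem_nhdsWithin] with r hr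
    exact aux_pos_r g p hp0 hsum hre i j hi hj hr.1 hr.2 t₀ t₁ t₂
  have := ge_of_tendsto htend hev
  rw [hΦ] at this
  simpa using this

lemma aux_reduce (P₁ P₂ P₃ : ℂ) (x y : ℝ) :
    ((2*(x:ℂ)*(starRingEnd ℂ) (2*P₂ - P₁*P₃)) * (starRingEnd ℂ) (2*(x:ℂ)*(starRingEnd ℂ) (2*P₂ - P₁*P₃))
      + (-(P₁*((x:ℂ)*(starRingEnd ℂ) (2*P₂ - P₁*P₃)) - (starRingEnd ℂ) P₃*(y:ℂ))) *
          (starRingEnd ℂ) (-(P₁*((x:ℂ)*(starRingEnd ℂ) (2*P₂ - P₁*P₃)) - (starRingEnd ℂ) P₃*(y:ℂ)))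
      + (-2*(y:ℂ)) * (starRingEnd ℂ) (-2*(y:ℂ))).re
    + ((2*(x:ℂ)*(starRingEnd ℂ) (2*P₂ - P₁*P₃)) *
        (starRingEnd ℂ) (-(P₁*((x:ℂ)*(starRingEnd ℂ) (2*P₂ - P₁*P₃)) - (starRingEnd ℂ) P₃*(y:ℂ))) * P₁).re
    + ((2*(x:ℂ)*(starRingEnd ℂ) (2*P₂ - P₁*P₃)) * (starRingEnd ℂ) (-2*(y:ℂ)) * P₂).re
    + ((-(P₁*((x:ℂ)*(starRingEnd ℂ) (2*P₂ - P₁*P₃)) - (starRingEnd ℂ) P₃*(y:ℂ))) *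
        (starRingEnd ℂ) (-2*(y:ℂ)) * P₃).re
    = (4 - Complex.normSq P₁) * Complex.normSq (2*P₂ - P₁*P₃) * x^2
      + (4 - Complex.normSq P₃) * y^2
      - 2*x*y*Complex.normSq (2*P₂ - P₁*P₃) := by
  simp only [map_mul, map_sub, map_neg, map_ofNat, Complex.conj_conj, Complex.conj_ofReal,
    Complex.mul_re, Complex.mul_im, Complex.add_re, Complex.add_im, Complex.sub_re,
    Complex.sub_im, Complex.neg_re, Complex.neg_im, Complex.conj_re, Complex.conj_im,
    Complex.ofReal_re, Complex.ofReal_im, Complex.normSq_apply, Complex.re_ofNat,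
    Complex.im_ofNat]
  ring

lemma aux_scalar (α β q : ℝ) (hα : 0 ≤ α) (hβ : 0 ≤ β) (hq : 0 ≤ q)
    (H : ∀ x y : ℝ, 2*x*y*q ≤ α*q*x^2 + β*y^2) : q ≤ α*β := by
  rcases eq_or_lt_of_le hq with h0 | hqpos
  · nlinarith
  by_cases hβ0 : β = 0
  · exfalso
    have h := H 1 (α+1)
    rw [hβ0] at h
    nlinarith
  · have hβp : 0 < β := lt_of_le_of_ne hβ (Ne.symm hβ0)
    have h := H β q
    nlinarith [mul_pos hβp hqpos]

lemma aux_det (P₁ P₂ P₃ : ℂ)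
    (Q : ∀ t₀ t₁ t₂ : ℂ,
      0 ≤ (t₀ * (starRingEnd ℂ) t₀ + t₁ * (starRingEnd ℂ) t₁ + t₂ * (starRingEnd ℂ) t₂).re
        + (t₀ * (starRingEnd ℂ) t₁ * P₁).re
        + (t₀ * (starRingEnd ℂ) t₂ * P₂).re
        + (t₁ * (starRingEnd ℂ) t₂ * P₃).re) :
    Complex.normSq (2*P₂ - P₁*P₃) ≤ (4 - Complex.normSq P₁) * (4 - Complex.normSq P₃)
      ∧ Complex.normSq P₁ ≤ 4 ∧ Complex.normSq P₃ ≤ 4 := by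
  have h1 : Complex.normSq P₁ ≤ 4 := by
    have h := Q 2 (-P₁) 0
    simp only [map_mul, map_neg, map_ofNat, Complex.conj_conj,
      Complex.mul_re, Complex.mul_im, Complex.add_re, Complex.add_im, Complex.neg_re,
      Complex.neg_im, Complex.conj_re, Complex.conj_im, Complex.zero_re, Complex.zero_im,
      Complex.re_ofNat, Complex.im_ofNat, mul_zero, zero_mul, add_zero, zero_add] at h
    simp only [Complex.normSq_apply]
    nlinarith
  have h3 : Complex.normSq P₃ ≤ 4 := by
    have h := Q 0 2 (-P₃)
    simp only [map_mul, map_neg, map_ofNat, Complex.conj_conj,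
      Complex.mul_re, Complex.mul_im, Complex.add_re, Complex.add_im, Complex.neg_re,
      Complex.neg_im, Complex.conj_re, Complex.conj_im, Complex.zero_re, Complex.zero_im,
      Complex.re_ofNat, Complex.im_ofNat, mul_zero, zero_mul, add_zero, zero_add] at h
    simp only [Complex.normSq_apply]
    nlinarith
  refine ⟨?_, h1, h3⟩
  apply aux_scalar _ _ _ (by linarith) (by linarith) (Complex.normSq_nonneg _)
  intro x y
  have h := Q (2*(x:ℂ)*(starRingEnd ℂ) (2*P₂ - P₁*P₃))
    (-(P₁*((x:ℂ)*(starRingEnd ℂ) (2*P₂ - P₁*P₃)) - (starRingEnd ℂ) P₃*(y:ℂ)))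
    (-2*(y:ℂ))
  rw [aux_reduce P₁ P₂ P₃ x y] at h
  nlinarith [h]

lemma aux_final (P₁ P₂ P₃ : ℂ)
    (Q : ∀ t₀ t₁ t₂ : ℂ,
      0 ≤ (t₀ * (starRingEnd ℂ) t₀ + t₁ * (starRingEnd ℂ) t₁ + t₂ * (starRingEnd ℂ) t₂).re
        + (t₀ * (starRingEnd ℂ) t₁ * P₁).re
        + (t₀ * (starRingEnd ℂ) t₂ * P₂).re
        + (t₁ * (starRingEnd ℂ) t₂ * P₃).re) (ν : ℂ) :
    ‖P₂ - ν * (P₁ * P₃)‖ ≤ 2 * max 1 ‖1 - 2*ν‖ := by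
  obtain ⟨hdet, h1, h3⟩ := aux_det P₁ P₂ P₃ Q
  set a : ℝ := ‖P₁‖ with ha
  set b : ℝ := ‖P₃‖ with hb
  set s : ℝ := ‖(2*P₂ - P₁*P₃)‖ with hs
  set c : ℝ := ‖(1 - 2*ν)‖ with hc
  set M : ℝ := max 1 c with hM
  have ha0 : 0 ≤ a := norm_nonneg _
  have hb0 : 0 ≤ b := norm_nonneg _
  have hs0 : 0 ≤ s := norm_nonneg _
  have hc0 : 0 ≤ c := norm_nonneg _
  have hM1 : 1 ≤ M := le_max_left _ _
  have hMc : c ≤ M := le_max_right _ _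
  have ha2 : a^2 = Complex.normSq P₁ := by rw [ha, Complex.sq_norm]
  have hb2 : b^2 = Complex.normSq P₃ := by rw [hb, Complex.sq_norm]
  have hs2 : s^2 = Complex.normSq (2*P₂ - P₁*P₃) := by rw [hs, Complex.sq_norm]
  have hA : a^2 ≤ 4 := by rw [ha2]; exact h1
  have hB : b^2 ≤ 4 := by rw [hb2]; exact h3
  have hS : s^2 ≤ (4 - a^2) * (4 - b^2) := by rw [hs2, ha2, hb2]; exact hdet
  have hab : a * b ≤ 4 := by nlinarith
  have hstep : s + a * b ≤ 4 := by
    nlinarith [sq_nonneg (a - b), sq_nonneg (s + (4 - a*b)), sq_nonneg (a*b)]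
  have heq : P₂ - ν * (P₁ * P₃) = (2*P₂ - P₁*P₃)/2 + (1 - 2*ν)/2 * (P₁*P₃) := by ring
  rw [heq]
  calc ‖(2*P₂ - P₁*P₃)/2 + (1 - 2*ν)/2 * (P₁*P₃)‖
      ≤ ‖(2*P₂ - P₁*P₃)/2‖ + ‖(1 - 2*ν)/2 * (P₁*P₃)‖ :=
        norm_add_le _ _
    _ = s/2 + c/2 * (a*b) := by
        rw [norm_div, norm_mul, norm_div, norm_mul]
        simp [Complex.norm_two]
        rfl
    _ ≤ 2 * M := by
        nlinarith [mul_nonneg (sub_nonneg.2 hM1) hs0,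
          mul_nonneg (sub_nonneg.2 hMc) (mul_nonneg ha0 hb0)]

/-- If `f` is in the closed convex hull of the starlike functions, i.e.
`f(z) = (z/2)(1 + g(z) + z g'(z))` for some `g` in the Carathéodory class `P`
with Taylor coefficients `p`, so that `a n = n p_{n-1} / 2` for `n ≥ 2`, then for
all `m, n ≥ 2` and every `λ : ℂ`:
`|λ a_m a_n - a_{m+n-1}| ≤ (m+n-1) max 1 |1 - (mn/(m+n-1)) λ|`. -/
theorem convexHull_starlike_zalcman (g : ℂ → ℂ) (p : ℕ → ℂ)
    (hp0 : p 0 = 1)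
    (hsum : ∀ z ∈ ball (0 : ℂ) 1, HasSum (fun n : ℕ => p n * z ^ n) (g z))
    (hre : ∀ z ∈ ball (0 : ℂ) 1, 0 < (g z).re)
    (f : ℂ → ℂ)
    (hf : ∀ z ∈ ball (0 : ℂ) 1, f z = z / 2 * (1 + g z + z * deriv g z))
    (a : ℕ → ℂ)
    (ha : ∀ n : ℕ, 2 ≤ n → a n = (n : ℂ) * p (n - 1) / 2)
    (m n : ℕ) (hm : 2 ≤ m) (hn : 2 ≤ n) :
    ∀ lam : ℂ, ‖lam * (a m * a n) - a (m + n - 1)‖ ≤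
      ((m + n - 1 : ℕ) : ℝ) *
        max 1 ‖1 - ((m * n : ℕ) : ℂ) / ((m + n - 1 : ℕ) : ℂ) * lam‖ := by
  intro lam
  obtain ⟨i, hi1, rfl⟩ : ∃ i, 1 ≤ i ∧ m = i + 1 := ⟨m - 1, by omega, by omega⟩
  obtain ⟨j, hj1, rfl⟩ : ∃ j, 1 ≤ j ∧ n = j + 1 := ⟨n - 1, by omega, by omega⟩
  have hNnat : i + 1 + (j + 1) - 1 = i + j + 1 := by omega
  rw [hNnat]
  have hQ := aux_pos g p hp0 hsum hre i j hi1 hj1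
  have hN0 : ((i + j + 1 : ℕ) : ℂ) ≠ 0 := Nat.cast_ne_zero.mpr (by omega)
  have hne : ((i:ℂ) + (j:ℂ) + 1) ≠ 0 := by
    have hcast : ((i + j + 1 : ℕ) : ℂ) = (i:ℂ) + (j:ℂ) + 1 := by push_cast; ring
    rw [← hcast]
    exact hN0
  obtain ⟨ν, hν⟩ : ∃ ν : ℂ, ν = lam * ((i:ℂ)+1) * ((j:ℂ)+1) / (2 * ((i + j + 1 : ℕ) : ℂ)) :=
    ⟨_, rfl⟩
  have key := aux_final (p i) (p (i + j)) (p j) hQ ν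
  have hai : a (i+1) = ((i+1 : ℕ) : ℂ) * p i / 2 := by
    rw [ha (i+1) (by omega)]
    simp
  have haj : a (j+1) = ((j+1 : ℕ) : ℂ) * p j / 2 := by
    rw [ha (j+1) (by omega)]
    simp
  have haN : a (i+j+1) = ((i+j+1 : ℕ) : ℂ) * p (i+j) / 2 := by
    rw [ha (i+j+1) (by omega)]
    simp
  have hν' : ν * (2 * ((i + j + 1 : ℕ) : ℂ)) = lam * ((i:ℂ)+1) * ((j:ℂ)+1) := by
    rw [hν]
    field_simp
  push_cast at hν'
  have heq1 : lam * (a (i+1) * a (j+1)) - a (i+j+1) =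
      -(((i+j+1 : ℕ) : ℂ)/2) * (p (i+j) - ν * (p i * p j)) := by
    rw [hai, haj, haN]
    push_cast
    linear_combination (-(p i * p j) / 4) * hν'
  have h2ν : 2*ν = ((i:ℂ)+1) * ((j:ℂ)+1) * lam / ((i:ℂ)+(j:ℂ)+1) := by
    rw [eq_div_iff hne]
    linear_combination hν'
  have heq2 : 1 - (((i+1) * (j+1) : ℕ) : ℂ) / ((i + j + 1 : ℕ) : ℂ) * lam = 1 - 2*ν := by
    push_cast
    rw [h2ν]
    ring
  rw [heq1, heq2, norm_mul, norm_neg, norm_div]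
  have habs : ‖((i+j+1 : ℕ) : ℂ)‖ = ((i+j+1 : ℕ) : ℝ) := Complex.norm_natCast _
  rw [habs, Complex.norm_two]
  have hNpos : (0:ℝ) < ((i+j+1 : ℕ) : ℝ) := by positivity
  calc ((i+j+1 : ℕ) : ℝ) / 2 * ‖p (i+j) - ν * (p i * p j)‖
      ≤ ((i+j+1 : ℕ) : ℝ) / 2 * (2 * max 1 ‖1 - 2*ν‖) := by
        apply mul_le_mul_of_nonneg_left key (by positivity)
    _ = ((i+j+1 : ℕ) : ℝ) * max 1 ‖1 - 2*ν‖ := by ring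
end

section
/- Let a, b ∈ ℂ, r > 0 and M > 0. If |a − w·b| ≤ M for every w ∈ ℂ with |w − 1| = r, then |a − b| + r·|b| ≤ M. (Applied with a = a_n², b = a_{2n−1} and M = (n−1)² + r(2n−1), this shows that condition (D_r) implies condition (C_r) for functions in S, i.e. the third weak Zalcman conjecture implies the second.) -/
/-- If `|a − w b| ≤ M` for every `w : ℂ` on the circle `|w − 1| = r`, then
`|a − b| + r |b| ≤ M`. (This is the lemma showing that condition `(D_r)` implies
condition `(C_r)` for functions in `S`.) -/
theorem circle_bound_implies_sum_bound (a b : ℂ) (r M : ℝ) (hr : 0 < r) (hM : 0 < M)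
    (h : ∀ w : ℂ, ‖w - 1‖ = r → ‖a - w * b‖ ≤ M) :
    ‖a - b‖ + r * ‖b‖ ≤ M := by
  by_cases hb : b = 0
  · have := h (1 + r) (by simp [abs_of_pos hr])
    simpa [hb] using this
  by_cases hab : a = b
  · have := h (1 + r) (by simp [abs_of_pos hr])
    subst hab
    have e : a - (1 + (r : ℂ)) * a = -(r * a) := by ring
    rw [e] at this
    simpa [abs_of_pos hr] using this
  · have hab' : a - b ≠ 0 := sub_ne_zero.mpr hab
    set u : ℂ := -((a - b) * (‖b‖ : ℂ)) / (b * (‖a - b‖ : ℂ)) with hu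
    have habs : ‖b‖ ≠ 0 := norm_ne_zero_iff.mpr hb
    have habs' : ‖a - b‖ ≠ 0 := norm_ne_zero_iff.mpr hab'
    have hu1 : ‖u‖ = 1 := by
      rw [hu, norm_div, norm_neg, norm_mul, norm_mul, Complex.norm_real, Real.norm_eq_abs,
        Complex.norm_real, Real.norm_eq_abs, abs_of_nonneg (norm_nonneg b),
        abs_of_nonneg (norm_nonneg (a - b))]
      field_simp
    have hw : ‖(1 + (r : ℂ) * u) - 1‖ = r := by
      simp [norm_mul, hu1, Complex.norm_real, abs_of_pos hr]
    have key := h (1 + (r : ℂ) * u) hw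
    have hub : u * b = -((a - b) * (‖b‖ : ℂ)) / ((‖a - b‖ : ℂ)) := by
      have hc : (‖a - b‖ : ℂ) ≠ 0 := Complex.ofReal_ne_zero.mpr habs'
      rw [hu, div_mul_eq_mul_div, div_eq_div_iff (mul_ne_zero hb hc) hc]
      ring
    have e : a - (1 + (r : ℂ) * u) * b
        = (a - b) * (1 + (r : ℂ) * (‖b‖ : ℂ) / (‖a - b‖ : ℂ)) := by
      have : a - (1 + (r : ℂ) * u) * b = (a - b) - (r : ℂ) * (u * b) := by ring
      rw [this, hub]
      field_simp
      ring
    rw [e, norm_mul] at key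
    have e2 : ‖1 + (r : ℂ) * (‖b‖ : ℂ) / (‖a - b‖ : ℂ)‖
        = 1 + r * ‖b‖ / ‖a - b‖ := by
      have : (1 + (r : ℂ) * (‖b‖ : ℂ) / (‖a - b‖ : ℂ))
          = ((1 + r * ‖b‖ / ‖a - b‖ : ℝ) : ℂ) := by
        push_cast; ring
      rw [this, Complex.norm_real, Real.norm_eq_abs, abs_of_pos]
      positivity
    rw [e2] at key
    calc ‖a - b‖ + r * ‖b‖
        = ‖a - b‖ * (1 + r * ‖b‖ / ‖a - b‖) := by
          field_simp
      _ ≤ M := key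
end

section
/- Assume that there exists t ∈ (0,1] such that every f ∈ S satisfies |a_n² − t·a_{2n−1}| ≤ n² − t(2n−1) for all n ≥ 2 (the weak Zalcman condition (B_t)), and assume Littlewood's bound: |a_n| ≤ e·n for every f ∈ S and every n ≥ 2. Then every f ∈ S satisfies the Bieberbach inequality |a_n| ≤ n for all n ≥ 2. -/
open Metric

/-- `f` is in the class `S`: analytic and injective on the unit disk with Taylor
expansion `f(z) = z + Σ_{n≥2} a_n z^n` (so `f(0) = 0`, `f'(0) = 1`). -/
def IsInClassS (f : ℂ → ℂ) (a : ℕ → ℂ) : Prop :=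
  (∀ z ∈ ball (0 : ℂ) 1, HasSum (fun n : ℕ => a n * z ^ n) (f z)) ∧
    Set.InjOn f (ball (0 : ℂ) 1) ∧ a 0 = 0 ∧ a 1 = 1

lemma wz_step
    (hBt : ∃ t : ℝ, 0 < t ∧ t ≤ 1 ∧
      ∀ (f : ℂ → ℂ) (a : ℕ → ℂ), IsInClassS f a → ∀ n : ℕ, 2 ≤ n →
        ‖(a n) ^ 2 - (t : ℂ) * a (2 * n - 1)‖ ≤
          (n : ℝ) ^ 2 - t * (2 * (n : ℝ) - 1))
    (C : ℝ) (hC : 1 ≤ C)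
    (h : ∀ (f : ℂ → ℂ) (a : ℕ → ℂ), IsInClassS f a → ∀ n : ℕ, 2 ≤ n →
      ‖a n‖ ≤ C * n) :
    ∀ (f : ℂ → ℂ) (a : ℕ → ℂ), IsInClassS f a → ∀ n : ℕ, 2 ≤ n →
      ‖a n‖ ≤ Real.sqrt C * n := by
  obtain ⟨t, ht0, ht1, hBt⟩ := hBt
  intro f a hf n hn
  have hn1 : (1:ℝ) ≤ (n:ℝ) := by exact_mod_cast Nat.one_le_of_lt hn
  have hcast : ((2 * n - 1 : ℕ) : ℝ) = 2 * (n:ℝ) - 1 := by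
    have : 1 ≤ 2 * n := by omega
    push_cast [Nat.cast_sub this]
    ring
  have h2n : 2 ≤ 2 * n - 1 := by omega
  have hbig := h f a hf (2 * n - 1) h2n
  have hsq : (‖a n‖) ^ 2 ≤ C * (n:ℝ) ^ 2 := by
    have h1 : (‖a n‖) ^ 2 = ‖(a n) ^ 2‖ := by
      rw [norm_pow]
    have h2 : ‖(a n) ^ 2‖ ≤
        ‖(a n) ^ 2 - (t : ℂ) * a (2 * n - 1)‖ +
          ‖(t : ℂ) * a (2 * n - 1)‖ := by
      calc ‖(a n) ^ 2‖
          = ‖((a n) ^ 2 - (t : ℂ) * a (2 * n - 1)) + (t : ℂ) * a (2 * n - 1)‖ := by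
            ring_nf
        _ ≤ _ := norm_add_le _ _
    have h3 : ‖(t : ℂ) * a (2 * n - 1)‖ ≤ t * (C * (2 * (n:ℝ) - 1)) := by
      rw [norm_mul, Complex.norm_real, Real.norm_eq_abs, abs_of_pos ht0]
      have := mul_le_mul_of_nonneg_left hbig ht0.le
      rw [hcast] at this
      linarith
    have h4 := hBt f a hf n hn
    have h5 : (n:ℝ)^2 - t * (2*(n:ℝ)-1) + t * (C * (2*(n:ℝ)-1)) ≤ C * (n:ℝ)^2 := by
      have key : t * ((C - 1) * (2*(n:ℝ)-1)) ≤ (C - 1) * (n:ℝ)^2 := by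
        have h6 : (2*(n:ℝ)-1) ≤ (n:ℝ)^2 := by nlinarith
        have h7 : t * ((C - 1) * (2*(n:ℝ)-1)) ≤ 1 * ((C - 1) * (2*(n:ℝ)-1)) := by
          apply mul_le_mul_of_nonneg_right ht1
          nlinarith
        nlinarith
      nlinarith
    linarith [h1, h2, h3, h4, h5]
  have hCnn : (0:ℝ) ≤ C := by linarith
  calc ‖a n‖ = Real.sqrt ((‖a n‖)^2) := by
        rw [Real.sqrt_sq (norm_nonneg _)]
    _ ≤ Real.sqrt (C * (n:ℝ)^2) := Real.sqrt_le_sqrt hsq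
    _ = Real.sqrt C * n := by
        rw [Real.sqrt_mul hCnn, Real.sqrt_sq (by linarith : (0:ℝ) ≤ (n:ℝ))]

/-- If for some `t ∈ (0, 1]` every `f ∈ S` satisfies the weak Zalcman condition
`(B_t)`: `|a_n² − t a_{2n−1}| ≤ n² − t(2n−1)` for all `n ≥ 2`, then — granting
Littlewood's bound `|a_n| ≤ e n` — every `f ∈ S` satisfies the Bieberbach
inequality `|a_n| ≤ n` for all `n ≥ 2`. -/
theorem weak_zalcman_implies_bieberbach
    (hBt : ∃ t : ℝ, 0 < t ∧ t ≤ 1 ∧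
      ∀ (f : ℂ → ℂ) (a : ℕ → ℂ), IsInClassS f a → ∀ n : ℕ, 2 ≤ n →
        ‖(a n) ^ 2 - (t : ℂ) * a (2 * n - 1)‖ ≤
          (n : ℝ) ^ 2 - t * (2 * (n : ℝ) - 1))
    (hLittlewood : ∀ (f : ℂ → ℂ) (a : ℕ → ℂ), IsInClassS f a → ∀ n : ℕ, 2 ≤ n →
      ‖a n‖ ≤ Real.exp 1 * n) :
    ∀ (f : ℂ → ℂ) (a : ℕ → ℂ), IsInClassS f a → ∀ n : ℕ, 2 ≤ n →
      ‖a n‖ ≤ n := by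
  have sqrt_exp : ∀ x : ℝ, Real.sqrt (Real.exp x) = Real.exp (x / 2) := by
    intro x
    rw [show Real.exp x = Real.exp (x / 2) ^ 2 by
      rw [sq, ← Real.exp_add]; ring_nf]
    exact Real.sqrt_sq (Real.exp_pos _).le
  have key : ∀ k : ℕ, ∀ (f : ℂ → ℂ) (a : ℕ → ℂ), IsInClassS f a → ∀ n : ℕ, 2 ≤ n →
      ‖a n‖ ≤ Real.exp ((1/2 : ℝ)^k) * n := by
    intro k
    induction k with
    | zero => simpa using hLittlewood
    | succ k ih =>
        have := wz_step hBt (Real.exp ((1/2:ℝ)^k)) (Real.one_le_exp (by positivity)) ih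
        intro f a hf n hn
        have h := this f a hf n hn
        rwa [sqrt_exp, show (1/2:ℝ)^k / 2 = (1/2:ℝ)^(k+1) by ring] at h
  intro f a hf n hn
  have hlim : Filter.Tendsto (fun k : ℕ => Real.exp ((1/2:ℝ)^k) * (n:ℝ))
      Filter.atTop (nhds ((n:ℝ))) := by
    have h1 : Filter.Tendsto (fun k : ℕ => (1/2:ℝ)^k) Filter.atTop (nhds 0) :=
      tendsto_pow_atTop_nhds_zero_of_lt_one (by norm_num) (by norm_num)
    have h2 := (Real.continuous_exp.tendsto 0).comp h1
    rw [Real.exp_zero] at h2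
    have := h2.mul_const (n:ℝ)
    simpa using this
  exact ge_of_tendsto hlim (Filter.Eventually.of_forall fun k => key k f a hf n hn)
end
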